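/- If a partial order X admits a reification into a well order α, i.e., a map r from nonempty finite bad sequences of X into α such that proper extensions strictly decrease r, then X is a well partial order. -/

import Mathlib

/-- A finite sequence over a partial order is bad if no earlier member is less
than or equal to a later member. -/
def FinBad {X : Type*} [PartialOrder X] (s : List X) : Prop :=
  s.Pairwise fun a b => ¬ a ≤ b

/-- If a partial order `X` admits a reification into a well order `α`, i.e., a
map on nonempty finite bad sequences that strictly decreases along proper
extensions, then `X` is a well partial order. -/
theorem wpo_of_reification {X : Type*} [PartialOrder X]
    {α : Type*} [LinearOrder α] [WellFoundedLT α] (r : List X → α)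
    (hr : ∀ s t : List X, s ≠ [] → FinBad s → FinBad t → s <+: t → s ≠ t →
      r t < r s) :
    ∀ g : ℕ → X, ∃ i j : ℕ, i < j ∧ g i ≤ g j := by
  intro g
  by_contra h
  push_neg at h
  have hbad : ∀ n : ℕ, FinBad (List.ofFn fun i : Fin n => g i) := by
    intro n
    rw [FinBad, List.pairwise_ofFn]
    intro i j hij
    exact h i j hij
  set f : ℕ → α := fun n => r (List.ofFn fun i : Fin (n + 1) => g i) with hf
  have hdec : ∀ n, f (n + 1) < f n := by
    intro n
    apply hr _ _ _ (hbad (n + 1)) (hbad (n + 2))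
    · refine ⟨[g (n + 1)], ?_⟩
      rw [List.ofFn_succ' (n := n + 1)]
      simp [List.concat_eq_append, Fin.last]
    · intro he
      have := congrArg List.length he
      simp at this
    · simp [List.ofFn_eq_nil_iff]
  exact (RelEmbedding.natGT f hdec).not_wellFounded wellFounded_lt
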